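/- arXiv:2010.00930 — 3 statements merged into one kernel-verified Lean document; each statement's English description precedes it below -/
import Mathlib

section
/- Let T ∈ T^(m)(n) and let X_1, …, X_t be the maximal cadet sequences of T (which partition the set of nodes of T). Then the contribution of T equals the product of the contributions of its maximal cadet sequences: r_S(T) = ∏_{j=1}^t r_S(X_j). -/
open scoped Classical

/-- The derived sets `S⁻ᵢⱼ` of nonnegative integers:
for `i < j`, `S⁻ᵢⱼ = {s ≥ 0 : -s ∈ Sᵢⱼ}`, and `S⁻ⱼᵢ = {0} ∪ {s > 0 : s ∈ Sᵢⱼ}`. -/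
def Sminus {n : ℕ} (S : Fin n → Fin n → Finset ℤ) (i j : Fin n) : Set ℕ :=
  if i < j then {s : ℕ | -(s : ℤ) ∈ S i j}
  else {0} ∪ {s : ℕ | 0 < s ∧ (s : ℤ) ∈ S j i}

/-- `m`: the maximal absolute value of an element of some `S i j` (`i < j`). -/
def mOf {n : ℕ} (S : Fin n → Fin n → Finset ℤ) : ℕ :=
  Finset.univ.sup fun p : Fin n × Fin n =>
    if p.1 < p.2 then (S p.1 p.2).sup (fun s => s.natAbs) else 0

/-- A rooted labeled plane tree with `n` nodes (labeled by `Fin n`, index `i` representing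
the label `i+1`, so the node `1` is `(0 : Fin n)`), each node having exactly `m+1`
linearly ordered children; children that are not nodes are unlabeled leaves and carry no
further data. `parent v` is the parent node of the node `v` (with the convention
`parent root = root`), and `pos v` is the position of `v` among the `m+1` children of its
parent, so `(pos v : ℕ)` is the number `lsib v` of left siblings of `v`. -/
structure PlaneTree (n m : ℕ) where
  root : Fin n
  parent : Fin n → Fin n
  pos : Fin n → Fin (m + 1)
  parent_root : parent root = root
  reaches_root : ∀ v : Fin n, ∃ k : ℕ, parent^[k] v = root
  pos_inj : ∀ v w : Fin n, v ≠ root → w ≠ root → parent v = parent w → pos v = pos w → v = w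

namespace PlaneTree

variable {n m : ℕ}

/-- `v` is a child of `u` (among the nodes). -/
def IsChild (T : PlaneTree n m) (v u : Fin n) : Prop :=
  v ≠ T.root ∧ T.parent v = u

/-- `v` is the cadet of `u`: the rightmost child of `u` that is a node. -/
def IsCadet (T : PlaneTree n m) (u v : Fin n) : Prop :=
  T.IsChild v u ∧ ∀ w : Fin n, T.IsChild w u → T.pos w ≤ T.pos v

/-- The number of left siblings of `v`. -/
def lsib (T : PlaneTree n m) (v : Fin n) : ℕ := (T.pos v : ℕ)

end PlaneTree

/-- `(v a, v (a+1), …, v b)` is a cadet sequence of `T` (1-indexed, `1 ≤ a ≤ b`). -/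
def IsCadetWindow {n m : ℕ} (T : PlaneTree n m) (v : ℕ → Fin n) (a b : ℕ) : Prop :=
  1 ≤ a ∧ a ≤ b ∧ ∀ p : ℕ, a < p → p ≤ b → T.IsCadet (v (p - 1)) (v p)

/-- `v` is injective on the indices `a, …, b`. -/
def WindowInj {n : ℕ} (v : ℕ → Fin n) (a b : ℕ) : Prop :=
  ∀ p q : ℕ, a ≤ p → p ≤ b → a ≤ q → q ≤ b → v p = v q → p = q

/-- `(v a, …, v b)` is an `S`-cadet sequence of `T`. -/
def IsSCadetWindow {n m : ℕ} (S : Fin n → Fin n → Finset ℤ) (T : PlaneTree n m)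
    (v : ℕ → Fin n) (a b : ℕ) : Prop :=
  IsCadetWindow T v a b ∧
    ∀ i j : ℕ, a ≤ i → i < j → j ≤ b →
      (∑ p ∈ Finset.Icc (i + 1) j, T.lsib (v p)) ∉ Sminus S (v i) (v j)

/-- `(v 1, …, v k)` is a maximal cadet sequence of `T`: all children of `v k` are
leaves, and no node has `v 1` as its cadet. -/
def IsMaxCadetSeq {n m : ℕ} (T : PlaneTree n m) (k : ℕ) (v : ℕ → Fin n) : Prop :=
  IsCadetWindow T v 1 k ∧ (∀ w : Fin n, ¬ T.IsChild w (v k)) ∧ ∀ u : Fin n, ¬ T.IsCadet u (v 1)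

/-- `(v a, …, v b)` is a maximal `S`-cadet sequence inside the ambient cadet sequence
`(v 1, …, v k)`. -/
def IsMaxSCadetWindow {n m : ℕ} (S : Fin n → Fin n → Finset ℤ) (T : PlaneTree n m)
    (k : ℕ) (v : ℕ → Fin n) (a b : ℕ) : Prop :=
  b ≤ k ∧ IsSCadetWindow S T v a b ∧
    (a = 1 ∨ ¬ IsSCadetWindow S T v (a - 1) b) ∧
    (b = k ∨ ¬ IsSCadetWindow S T v a (b + 1))

/-- `Y` is (the set of nodes of) a maximal `S`-cadet sequence of `T`. -/
def IsMaxSCadetSet {n m : ℕ} (S : Fin n → Fin n → Finset ℤ) (T : PlaneTree n m)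
    (Y : Finset (Fin n)) : Prop :=
  ∃ (k : ℕ) (v : ℕ → Fin n) (a b : ℕ), IsMaxCadetSeq T k v ∧ WindowInj v 1 k ∧
    IsMaxSCadetWindow S T k v a b ∧ Y = (Finset.Icc a b).image v

/-- `Y` is (the set of nodes of) a nonempty cadet sequence of `T`. -/
def IsCadetSeqSet {n m : ℕ} (T : PlaneTree n m) (Y : Finset (Fin n)) : Prop :=
  ∃ (k : ℕ) (v : ℕ → Fin n), IsCadetWindow T v 1 k ∧ WindowInj v 1 k ∧
    Y = (Finset.Icc 1 k).image v

/-- `X` is (the set of nodes of) an `S`-connected cadet sequence of `T`: it is a cadet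
sequence, every maximal `S`-cadet sequence is disjoint from it or contained in it, and no
cadet sequence with this property is properly contained in it. -/
def SConnected {n m : ℕ} (S : Fin n → Fin n → Finset ℤ) (T : PlaneTree n m)
    (X : Finset (Fin n)) : Prop :=
  IsCadetSeqSet T X ∧
    (∀ Y, IsMaxSCadetSet S T Y → X ∩ Y = ∅ ∨ Y ⊆ X) ∧
    ∀ X', IsCadetSeqSet T X' → (∀ Y, IsMaxSCadetSet S T Y → X' ∩ Y = ∅ ∨ Y ⊆ X') →
      X' ⊆ X → X' = X

/-- `Y` is (the set of nodes of) an `S`-cadet sequence of `T` (a possible box). -/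
def IsSBox {n m : ℕ} (S : Fin n → Fin n → Finset ℤ) (T : PlaneTree n m)
    (Y : Finset (Fin n)) : Prop :=
  ∃ (k : ℕ) (v : ℕ → Fin n), IsSCadetWindow S T v 1 k ∧ WindowInj v 1 k ∧
    Y = (Finset.Icc 1 k).image v

/-- `B` is an `S`-boxing of the set of nodes `X`: a partition of `X` into
`S`-cadet sequences. -/
def IsSBoxingOf {n m : ℕ} (S : Fin n → Fin n → Finset ℤ) (T : PlaneTree n m)
    (X : Finset (Fin n)) (B : Finset (Finset (Fin n))) : Prop :=
  (∀ Y ∈ B, IsSBox S T Y ∧ Y ⊆ X) ∧ ∀ u ∈ X, ∃! Y, Y ∈ B ∧ u ∈ Y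

/-- The contribution `r_S(X)` of a cadet sequence with (injective) node set `X`
(whose length is `X.card`): `∑_{B ∈ U_S(X)} (-1)^(|X| - |B|)`. -/
noncomputable def contrib {n m : ℕ} (S : Fin n → Fin n → Finset ℤ) (T : PlaneTree n m)
    (X : Finset (Fin n)) : ℤ :=
  ∑ B : Finset (Finset (Fin n)),
    if IsSBoxingOf S T X B then (-1 : ℤ) ^ (X.card - B.card) else 0

/-- The contribution `r_S(T) = ∑_{B ∈ U_S(T)} (-1)^(n - |B|)` of the tree `T`. -/
noncomputable def treeContrib {n m : ℕ} (S : Fin n → Fin n → Finset ℤ)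
    (T : PlaneTree n m) : ℤ :=
  contrib S T Finset.univ

/-- The tuple `S` is transitive. -/
def TransitiveS {n : ℕ} (S : Fin n → Fin n → Finset ℤ) : Prop :=
  ∀ i j k : Fin n, i ≠ j → j ≠ k → i ≠ k →
    ∀ s t : ℕ, s ∉ Sminus S i j → t ∉ Sminus S j k → s + t ∉ Sminus S i k

/-- The arrangement `A_S` is almost transitive (`(i : ℕ) = 0` encodes "`i` is the node `1`"). -/
def AlmostTransitive {n : ℕ} (S : Fin n → Fin n → Finset ℤ) : Prop :=
  ∀ i j k : Fin n, i ≠ j → j ≠ k → i ≠ k → (i : ℕ) ≠ 0 → (k : ℕ) ≠ 0 →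
    ∀ s t : ℕ, s ∉ Sminus S i j → t ∉ Sminus S j k → s + t ∉ Sminus S i k

/-- `A_S` is an Ish-type arrangement: `0 ∈ Sᵢⱼ` for all `i < j`, and `Sᵢⱼ = {0}`
whenever `1 < i < j`. -/
def IshType {n : ℕ} (S : Fin n → Fin n → Finset ℤ) : Prop :=
  (∀ i j : Fin n, i < j → (0 : ℤ) ∈ S i j) ∧
    ∀ i j : Fin n, 0 < (i : ℕ) → i < j → S i j = {0}

/-- `A_S` is a nested Ish arrangement. -/
def NestedIsh {n : ℕ} (S : Fin n → Fin n → Finset ℤ) : Prop :=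
  IshType S ∧ ∀ i j k : Fin n, (i : ℕ) = 0 → 0 < (j : ℕ) → j < k → S i j ⊆ S i k

/-- The lower inefficiency `E_l(T)`: the number of lower inefficient nodes of `T`,
i.e. nodes `w` that are left siblings of the node `1` with `lsib w ∉ S⁻_{w,1}`. -/
noncomputable def Elow {n m : ℕ} [NeZero n] (S : Fin n → Fin n → Finset ℤ)
    (T : PlaneTree n m) : ℕ :=
  (Finset.univ.filter fun w : Fin n =>
    w ≠ T.root ∧ (0 : Fin n) ≠ T.root ∧ T.parent w = T.parent 0 ∧ T.pos w < T.pos 0 ∧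
      T.lsib w ∉ Sminus S w 0).card

/-- The upper inefficiency `E_u(T)`: the number of upper inefficient nodes of `T`,
i.e. nodes `w` with parent the node `1` that are not the cadet of `1`, with
`lsib w ∉ S⁻_{1,w}`. -/
noncomputable def Eup {n m : ℕ} [NeZero n] (S : Fin n → Fin n → Finset ℤ)
    (T : PlaneTree n m) : ℕ :=
  (Finset.univ.filter fun w : Fin n =>
    T.IsChild w 0 ∧ ¬ T.IsCadet 0 w ∧ T.lsib w ∉ Sminus S 0 w).card

/-- The class `S(e_l, ℓ_l, e_u, ℓ_u)` of trees in `T^(m)(n)` with nonzero contribution,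
lower/upper inefficiencies `e_l, e_u` and lower/upper 1-lengths `ℓ_l, ℓ_u` (the latter
expressed via the maximal `S`-cadet sequence `{v_{j-ℓ_l}, …, v_j, …, v_{j+ℓ_u}}`
around the node `1 = v j` inside its maximal cadet sequence `(v 1, …, v t)`). -/
def ClassS {n : ℕ} [NeZero n] (S : Fin n → Fin n → Finset ℤ) (el ll eu lu : ℕ) :
    Set (PlaneTree n (mOf S)) :=
  {T | treeContrib S T ≠ 0 ∧ Elow S T = el ∧ Eup S T = eu ∧
    ∃ (t : ℕ) (v : ℕ → Fin n) (j : ℕ), IsMaxCadetSeq T t v ∧ WindowInj v 1 t ∧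
      1 ≤ j ∧ j ≤ t ∧ v j = 0 ∧ ll < j ∧ j + lu ≤ t ∧
      IsMaxSCadetWindow S T t v (j - ll) (j + lu)}

/-- The complement in `ℝ^n` of the union of the hyperplanes `xᵢ - xⱼ = s`
(`i < j`, `s ∈ S i j`) of the arrangement `A_S`. -/
def complementSet {n : ℕ} (S : Fin n → Fin n → Finset ℤ) : Set (Fin n → ℝ) :=
  {x | ∀ i j : Fin n, i < j → ∀ s ∈ S i j, x i - x j ≠ (s : ℝ)}

/-- The number of regions `r_S` of the arrangement `A_S`: the number of connected
components of the complement of its hyperplanes. -/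
noncomputable def numRegions {n : ℕ} (S : Fin n → Fin n → Finset ℤ) : ℕ :=
  Nat.card (ConnectedComponents ↥(complementSet S))

/-- A rooted labeled plane tree with `n` nodes and arbitrary numbers of children:
`nchild u` is the total number of (linearly ordered) children of the node `u`, and
`pos v` the position of the node `v` among the children of its parent (so
`lsib v = pos v` and `rsib v = nchild (parent v) - 1 - pos v`). Children not occupied
by nodes are unlabeled leaves. -/
structure LPTree (n : ℕ) where
  root : Fin n
  parent : Fin n → Fin n
  pos : Fin n → ℕ
  nchild : Fin n → ℕ
  parent_root : parent root = root
  reaches_root : ∀ v : Fin n, ∃ k : ℕ, parent^[k] v = root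
  pos_lt : ∀ v : Fin n, v ≠ root → pos v < nchild (parent v)
  pos_inj : ∀ v w : Fin n, v ≠ root → w ≠ root → parent v = parent w → pos v = pos w → v = w

/-- Membership in the set `𝔗(S)`: the root is the node `1`, the node `1` has `2m+2`
children, every other node has exactly one child, and every node `k ≠ 1` satisfies
`lsib k ∈ S⁻₁ₖ` or `rsib k ∈ S⁻ₖ₁`. -/
def IsFrakT {n : ℕ} [NeZero n] (S : Fin n → Fin n → Finset ℤ) (T : LPTree n) : Prop :=
  T.root = 0 ∧ T.nchild 0 = 2 * mOf S + 2 ∧ (∀ v : Fin n, v ≠ 0 → T.nchild v = 1) ∧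
    ∀ v : Fin n, v ≠ 0 →
      (T.pos v ∈ Sminus S 0 v ∨ (T.nchild (T.parent v) - 1 - T.pos v) ∈ Sminus S v 0)

/-- For an `S`-connected cadet sequence `(v 1, …, v k)` whose maximal `S`-cadet
sequences are the windows `[a r, b r]` (`1 ≤ r ≤ k'`, in increasing order of last index),
`LastIdx a b k' j` is the index of the largest-indexed node of `X_j \ X_{j+1}`
(with `X_{k'+1} = {0}` containing no node of the sequence). -/
def LastIdx (a b : ℕ → ℕ) (k' j : ℕ) : ℕ :=
  ((Finset.Icc (a j) (b j)) \
    (if j = k' then (∅ : Finset ℕ) else Finset.Icc (a (j + 1)) (b (j + 1)))).sup id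

/-- `X_i` reaches `X_j`: the parent of the largest-indexed node of `X_j \ X_{j+1}`
belongs to `X_i`, with the conventions `X_0 = {0}`, `parent (v 1) = 0`
(the index `0` plays the role of `X_0`). -/
def Reaches (a b : ℕ → ℕ) (k' i j : ℕ) : Prop :=
  i < j ∧ j ≤ k' ∧
    ((i = 0 ∧ LastIdx a b k' j = 1) ∨
      (1 ≤ i ∧ 2 ≤ LastIdx a b k' j ∧ a i ≤ LastIdx a b k' j - 1 ∧
        LastIdx a b k' j - 1 ≤ b i))

/-- A successful run of the algorithm: `idx 0 = 0`; at each step, the next term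
`idx (j+1)` is the smallest-indexed maximal `S`-cadet sequence reached by `X_{idx j}`
but not reached by any `X_{idx l}` with `l < j`; the run terminates at `k'`
after `t` steps. -/
def AlgRun (a b : ℕ → ℕ) (k' t : ℕ) (idx : ℕ → ℕ) : Prop :=
  idx 0 = 0 ∧ idx t = k' ∧ (∀ j, j < t → idx j ≠ k') ∧
    ∀ j, j < t →
      Reaches a b k' (idx j) (idx (j + 1)) ∧
        (∀ l, l < j → ¬ Reaches a b k' (idx l) (idx (j + 1))) ∧
        ∀ r, r < idx (j + 1) → Reaches a b k' (idx j) r → ∃ l, l < j ∧ Reaches a b k' (idx l) r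

/-- Condition (2) of Proposition 4.5 (with lower 1-length `i` and upper 1-length `k`),
for the maximal cadet sequence `(v 1, …, v t)` containing the node `1 = v j`. -/
def Cond9 {n m : ℕ} (S : Fin n → Fin n → Finset ℤ) (T : PlaneTree n m)
    (t : ℕ) (v : ℕ → Fin n) (j i k : ℕ) : Prop :=
  i < j ∧ k ≤ t - j ∧
    (∀ s : ℕ, 1 ≤ s → s ≤ t → (s < j - i - 1 ∨ j + k + 1 < s) →
      IsMaxSCadetWindow S T t v s s) ∧
    IsMaxSCadetWindow S T t v (j - i) (j + k) ∧
    (j - i ≠ 1 → IsMaxSCadetWindow S T t v (j - i - 1) (j - 1)) ∧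
    (j - i = 1 → i = 0) ∧
    (j + k ≠ t → IsMaxSCadetWindow S T t v (j + 1) (j + k + 1)) ∧
    (j + k = t → k = 0) ∧
    ∀ a' b' : ℕ, IsMaxSCadetWindow S T t v a' b' →
      ((a' = b' ∧ (a' < j - i - 1 ∨ j + k + 1 < a')) ∨ (a' = j - i ∧ b' = j + k) ∨
        (j - i ≠ 1 ∧ a' = j - i - 1 ∧ b' = j - 1) ∨ (j + k ≠ t ∧ a' = j + 1 ∧ b' = j + k + 1))

section AuxLemmas

variable {n m : ℕ} {S : Fin n → Fin n → Finset ℤ} {T : PlaneTree n m}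

/-- A node has at most one cadet. -/
lemma cadet_unique {u v w : Fin n} (hv : T.IsCadet u v) (hw : T.IsCadet u w) : v = w := by
  have h1 := hv.2 w hw.1
  have h2 := hw.2 v hv.1
  exact T.pos_inj v w hv.1.1 hw.1.1 (hv.1.2.trans hw.1.2.symm) (le_antisymm h2 h1)

/-- Every `S`-box is nonempty. -/
lemma sbox_nonempty {Y : Finset (Fin n)} (h : IsSBox S T Y) : Y.Nonempty := by
  obtain ⟨k, v, hw, _, rfl⟩ := h
  exact ⟨v 1, Finset.mem_image_of_mem v (Finset.mem_Icc.mpr ⟨le_refl 1, hw.1.2.1⟩)⟩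

lemma boxing_blocks_disjoint {X : Finset (Fin n)} {B : Finset (Finset (Fin n))}
    (h : IsSBoxingOf S T X B) {Y Y' : Finset (Fin n)} (hY : Y ∈ B) (hY' : Y' ∈ B)
    (hne : Y ≠ Y') : Disjoint Y Y' := by
  rw [Finset.disjoint_left]
  intro u huY huY'
  have hu : u ∈ X := (h.1 Y hY).2 huY
  obtain ⟨Z, _, hZuniq⟩ := h.2 u hu
  exact hne ((hZuniq Y ⟨hY, huY⟩).trans (hZuniq Y' ⟨hY', huY'⟩).symm)

lemma boxing_card_le {X : Finset (Fin n)} {B : Finset (Finset (Fin n))}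
    (h : IsSBoxingOf S T X B) : B.card ≤ X.card := by
  calc B.card ≤ ∑ Y ∈ B, Y.card := by
        have := Finset.card_nsmul_le_sum B (fun Y => Y.card) 1
          (fun Y hY => Finset.card_pos.mpr (sbox_nonempty (h.1 Y hY).1))
        simpa using this
    _ = (B.biUnion id).card := (Finset.card_biUnion
        (fun Y hY Y' hY' hne => boxing_blocks_disjoint h hY hY' hne)).symm
    _ ≤ X.card := Finset.card_le_card (fun u hu => by
        obtain ⟨Y, hY, huY⟩ := Finset.mem_biUnion.mp hu
        exact (h.1 Y hY).2 huY)

lemma contrib_empty : contrib S T (∅ : Finset (Fin n)) = 1 := by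
  have hiff : ∀ B : Finset (Finset (Fin n)), IsSBoxingOf S T ∅ B ↔ B = ∅ := by
    intro B
    constructor
    · intro h
      by_contra hB
      obtain ⟨Y, hY⟩ := Finset.nonempty_iff_ne_empty.mpr hB
      obtain ⟨y, hy⟩ := sbox_nonempty (h.1 Y hY).1
      exact absurd ((h.1 Y hY).2 hy) (Finset.notMem_empty y)
    · rintro rfl
      exact ⟨fun Y hY => absurd hY (Finset.notMem_empty Y),
        fun u hu => absurd hu (Finset.notMem_empty u)⟩
  rw [contrib]
  rw [Finset.sum_eq_single (∅ : Finset (Finset (Fin n)))]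
  · rw [if_pos ((hiff ∅).mpr rfl)]; simp
  · intro B _ hB
    rw [if_neg (fun h => hB ((hiff B).mp h))]
  · intro h; exact absurd (Finset.mem_univ _) h

lemma contrib_union {X Z : Finset (Fin n)} (hdis : Disjoint X Z)
    (hsplit : ∀ Y : Finset (Fin n), IsSBox S T Y → Y ⊆ X ∪ Z → Y ⊆ X ∨ Y ⊆ Z) :
    contrib S T (X ∪ Z) = contrib S T X * contrib S T Z := by
  classical
  have key1 : ∀ B : Finset (Finset (Fin n)), IsSBoxingOf S T (X ∪ Z) B →
      IsSBoxingOf S T X (B.filter (· ⊆ X)) ∧ IsSBoxingOf S T Z (B.filter (· ⊆ Z)) := by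
    intro B hB
    constructor
    · constructor
      · intro Y hY
        rw [Finset.mem_filter] at hY
        exact ⟨(hB.1 Y hY.1).1, hY.2⟩
      · intro u hu
        obtain ⟨Y, ⟨hYB, huY⟩, hYuniq⟩ := hB.2 u (Finset.mem_union_left Z hu)
        have hYX : Y ⊆ X := by
          rcases hsplit Y (hB.1 Y hYB).1 (hB.1 Y hYB).2 with h | h
          · exact h
          · exact absurd (h huY) (fun hz => (Finset.disjoint_left.mp hdis hu) hz)
        exact ⟨Y, ⟨Finset.mem_filter.mpr ⟨hYB, hYX⟩, huY⟩,
          fun Y' ⟨hY', hu'⟩ => hYuniq Y' ⟨(Finset.mem_filter.mp hY').1, hu'⟩⟩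
    · constructor
      · intro Y hY
        rw [Finset.mem_filter] at hY
        exact ⟨(hB.1 Y hY.1).1, hY.2⟩
      · intro u hu
        obtain ⟨Y, ⟨hYB, huY⟩, hYuniq⟩ := hB.2 u (Finset.mem_union_right X hu)
        have hYZ : Y ⊆ Z := by
          rcases hsplit Y (hB.1 Y hYB).1 (hB.1 Y hYB).2 with h | h
          · exact absurd (h huY) (fun hz => (Finset.disjoint_right.mp hdis hu) hz)
          · exact h
        exact ⟨Y, ⟨Finset.mem_filter.mpr ⟨hYB, hYZ⟩, huY⟩,
          fun Y' ⟨hY', hu'⟩ => hYuniq Y' ⟨(Finset.mem_filter.mp hY').1, hu'⟩⟩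
  have key2 : ∀ B1 B2 : Finset (Finset (Fin n)), IsSBoxingOf S T X B1 →
      IsSBoxingOf S T Z B2 → IsSBoxingOf S T (X ∪ Z) (B1 ∪ B2) := by
    intro B1 B2 h1 h2
    constructor
    · intro Y hY
      rcases Finset.mem_union.mp hY with h | h
      · exact ⟨(h1.1 Y h).1, (h1.1 Y h).2.trans Finset.subset_union_left⟩
      · exact ⟨(h2.1 Y h).1, (h2.1 Y h).2.trans Finset.subset_union_right⟩
    · intro u hu
      rcases Finset.mem_union.mp hu with hu | hu
      · obtain ⟨Y, ⟨hYB, huY⟩, hYuniq⟩ := h1.2 u hu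
        refine ⟨Y, ⟨Finset.mem_union_left _ hYB, huY⟩, ?_⟩
        rintro Y' ⟨hY', hu'⟩
        rcases Finset.mem_union.mp hY' with h | h
        · exact hYuniq Y' ⟨h, hu'⟩
        · exact absurd ((h2.1 Y' h).2 hu') (fun hz => Finset.disjoint_left.mp hdis hu hz)
      · obtain ⟨Y, ⟨hYB, huY⟩, hYuniq⟩ := h2.2 u hu
        refine ⟨Y, ⟨Finset.mem_union_right _ hYB, huY⟩, ?_⟩
        rintro Y' ⟨hY', hu'⟩
        rcases Finset.mem_union.mp hY' with h | h
        · exact absurd ((h1.1 Y' h).2 hu') (fun hz => Finset.disjoint_right.mp hdis hu hz)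
        · exact hYuniq Y' ⟨h, hu'⟩
  -- rewrite contributions as sums over filtered sets
  have hcX : contrib S T X =
      ∑ B ∈ Finset.univ.filter (IsSBoxingOf S T X ·), (-1 : ℤ) ^ (X.card - B.card) := by
    rw [contrib, Finset.sum_filter]
  have hcZ : contrib S T Z =
      ∑ B ∈ Finset.univ.filter (IsSBoxingOf S T Z ·), (-1 : ℤ) ^ (Z.card - B.card) := by
    rw [contrib, Finset.sum_filter]
  have hcXZ : contrib S T (X ∪ Z) =
      ∑ B ∈ Finset.univ.filter (IsSBoxingOf S T (X ∪ Z) ·),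
        (-1 : ℤ) ^ ((X ∪ Z).card - B.card) := by
    rw [contrib, Finset.sum_filter]
  rw [hcX, hcZ, hcXZ, Finset.sum_mul_sum, ← Finset.sum_product']
  refine Finset.sum_nbij' (fun B => (B.filter (· ⊆ X), B.filter (· ⊆ Z)))
    (fun p => p.1 ∪ p.2) ?_ ?_ ?_ ?_ ?_
  · intro B hB
    rw [Finset.mem_filter] at hB
    obtain ⟨h1, h2⟩ := key1 B hB.2
    exact Finset.mem_product.mpr ⟨Finset.mem_filter.mpr ⟨Finset.mem_univ _, h1⟩,
      Finset.mem_filter.mpr ⟨Finset.mem_univ _, h2⟩⟩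
  · intro p hp
    rw [Finset.mem_product, Finset.mem_filter, Finset.mem_filter] at hp
    exact Finset.mem_filter.mpr ⟨Finset.mem_univ _, key2 p.1 p.2 hp.1.2 hp.2.2⟩
  · intro B hB
    rw [Finset.mem_filter] at hB
    have hB' := hB.2
    ext Y
    simp only [Finset.mem_union, Finset.mem_filter]
    constructor
    · rintro (⟨h, _⟩ | ⟨h, _⟩) <;> exact h
    · intro hY
      rcases hsplit Y (hB'.1 Y hY).1 (hB'.1 Y hY).2 with h | h
      · exact Or.inl ⟨hY, h⟩
      · exact Or.inr ⟨hY, h⟩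
  · intro p hp
    rw [Finset.mem_product, Finset.mem_filter, Finset.mem_filter] at hp
    have h1 := hp.1.2
    have h2 := hp.2.2
    have e1 : (p.1 ∪ p.2).filter (· ⊆ X) = p.1 := by
      ext Y
      simp only [Finset.mem_filter, Finset.mem_union]
      constructor
      · rintro ⟨h | h, hYX⟩
        · exact h
        · exfalso
          obtain ⟨y, hy⟩ := sbox_nonempty (h2.1 Y h).1
          exact Finset.disjoint_left.mp hdis (hYX hy) ((h2.1 Y h).2 hy)
      · intro h
        exact ⟨Or.inl h, (h1.1 Y h).2⟩
    have e2 : (p.1 ∪ p.2).filter (· ⊆ Z) = p.2 := by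
      ext Y
      simp only [Finset.mem_filter, Finset.mem_union]
      constructor
      · rintro ⟨h | h, hYZ⟩
        · exfalso
          obtain ⟨y, hy⟩ := sbox_nonempty (h1.1 Y h).1
          exact Finset.disjoint_left.mp hdis ((h1.1 Y h).2 hy) (hYZ hy)
        · exact h
      · intro h
        exact ⟨Or.inr h, (h2.1 Y h).2⟩
    rw [e1, e2]
  · intro B hB
    rw [Finset.mem_filter] at hB
    obtain ⟨hB1, hB2⟩ := key1 B hB.2
    have hdB : Disjoint (B.filter (· ⊆ X)) (B.filter (· ⊆ Z)) := by
      rw [Finset.disjoint_left]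
      intro Y hY1 hY2
      rw [Finset.mem_filter] at hY1 hY2
      obtain ⟨y, hy⟩ := sbox_nonempty (hB.2.1 Y hY1.1).1
      exact Finset.disjoint_left.mp hdis (hY1.2 hy) (hY2.2 hy)
    have hcardB : B.card = (B.filter (· ⊆ X)).card + (B.filter (· ⊆ Z)).card := by
      rw [← Finset.card_union_of_disjoint hdB]
      congr 1
      ext Y
      simp only [Finset.mem_union, Finset.mem_filter]
      constructor
      · intro hY
        rcases hsplit Y (hB.2.1 Y hY).1 (hB.2.1 Y hY).2 with h | h
        · exact Or.inl ⟨hY, h⟩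
        · exact Or.inr ⟨hY, h⟩
      · rintro (⟨h, _⟩ | ⟨h, _⟩) <;> exact h
    have hcardXZ : (X ∪ Z).card = X.card + Z.card := Finset.card_union_of_disjoint hdis
    have hle1 : (B.filter (· ⊆ X)).card ≤ X.card := boxing_card_le hB1
    have hle2 : (B.filter (· ⊆ Z)).card ≤ Z.card := boxing_card_le hB2
    dsimp only
    rw [← pow_add]
    congr 1
    omega

end AuxLemmas

section MainLemmas

variable {n m : ℕ} {S : Fin n → Fin n → Finset ℤ} {T : PlaneTree n m}

/-- A cadet sequence starting inside a maximal cadet sequence stays inside it. -/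
lemma chain_in_max {k : ℕ} {v : ℕ → Fin n} (hv : IsCadetWindow T v 1 k)
    {ku : ℕ} {u : ℕ → Fin n} (hm : IsMaxCadetSeq T ku u)
    {q : ℕ} (hq1 : 1 ≤ q) (hqk : q ≤ ku) (hvq : v 1 = u q) :
    ∀ p, 1 ≤ p → p ≤ k → q + p - 1 ≤ ku ∧ v p = u (q + p - 1) := by
  intro p
  induction p with
  | zero => omega
  | succ p ih =>
    intro _ hpk
    rcases Nat.eq_zero_or_pos p with hp0 | hp1
    · subst hp0
      have e : q + (0 + 1) - 1 = q := by omega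
      rw [e]
      exact ⟨hqk, hvq⟩
    · obtain ⟨hle, heq⟩ := ih hp1 (by omega)
      have hc : T.IsCadet (v p) (v (p + 1)) := by
        have h := hv.2.2 (p + 1) (by omega) hpk
        have e : p + 1 - 1 = p := by omega
        rwa [e] at h
      have hne : q + p - 1 ≠ ku := by
        intro hEq
        apply hm.2.1 (v (p + 1))
        rw [← hEq, ← heq]
        exact hc.1
      have hlt : q + p ≤ ku := by omega
      have hc' : T.IsCadet (u (q + p - 1)) (u (q + p)) := hm.1.2.2 (q + p) (by omega) hlt
      rw [heq] at hc
      have e : q + (p + 1) - 1 = q + p := by omega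
      rw [e]
      exact ⟨by omega, cadet_unique hc hc'⟩

end MainLemmas

/-- Lemma 3.5: the contribution of a tree equals the product of the
contributions of its maximal cadet sequences `X_1, …, X_t` (which partition its nodes). -/
theorem statement_0 {n : ℕ} (S : Fin n → Fin n → Finset ℤ) (T : PlaneTree n (mOf S))
    (t : ℕ) (ks : ℕ → ℕ) (vs : ℕ → ℕ → Fin n)
    (hmax : ∀ j, 1 ≤ j → j ≤ t → IsMaxCadetSeq T (ks j) (vs j) ∧ WindowInj (vs j) 1 (ks j))
    (hcover : (Finset.Icc 1 t).biUnion (fun j => (Finset.Icc 1 (ks j)).image (vs j)) =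
      (Finset.univ : Finset (Fin n)))
    (hdisj : ∀ j l, 1 ≤ j → j < l → l ≤ t →
      Disjoint ((Finset.Icc 1 (ks j)).image (vs j)) ((Finset.Icc 1 (ks l)).image (vs l))) :
    treeContrib S T = ∏ j ∈ Finset.Icc 1 t, contrib S T ((Finset.Icc 1 (ks j)).image (vs j)) := by
    classical
  have hbox : ∀ Y : Finset (Fin n), IsSBox S T Y →
      ∃ j, 1 ≤ j ∧ j ≤ t ∧ Y ⊆ (Finset.Icc 1 (ks j)).image (vs j) := by
    intro Y hY
    obtain ⟨k, v, hw, hinj, rfl⟩ := hY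
    have hv1 : v 1 ∈ (Finset.univ : Finset (Fin n)) := Finset.mem_univ _
    rw [← hcover] at hv1
    obtain ⟨j, hj, hmem⟩ := Finset.mem_biUnion.mp hv1
    rw [Finset.mem_Icc] at hj
    obtain ⟨q, hq, hvq⟩ := Finset.mem_image.mp hmem
    rw [Finset.mem_Icc] at hq
    refine ⟨j, hj.1, hj.2, ?_⟩
    intro y hy
    obtain ⟨p, hp, rfl⟩ := Finset.mem_image.mp hy
    rw [Finset.mem_Icc] at hp
    obtain ⟨hle, heq⟩ :=
      chain_in_max hw.1 (hmax j hj.1 hj.2).1 hq.1 hq.2 hvq.symm p hp.1 hp.2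
    rw [heq]
    exact Finset.mem_image_of_mem _ (Finset.mem_Icc.mpr ⟨by omega, hle⟩)
  have main : ∀ l, l ≤ t →
      contrib S T ((Finset.Icc 1 l).biUnion
          (fun j => (Finset.Icc 1 (ks j)).image (vs j))) =
        ∏ j ∈ Finset.Icc 1 l, contrib S T ((Finset.Icc 1 (ks j)).image (vs j)) := by
    intro l
    induction l with
    | zero =>
      intro _
      simp only [Finset.Icc_eq_empty_of_lt (by omega : (1 : ℕ) > 0),
        Finset.biUnion_empty, Finset.prod_empty]
      exact contrib_empty
    | succ l ih =>
      intro hlt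
      have hIns : Finset.Icc 1 (l + 1) = insert (l + 1) (Finset.Icc 1 l) := by
        ext x
        simp only [Finset.mem_Icc, Finset.mem_insert]
        omega
      have hU : (Finset.Icc 1 (l + 1)).biUnion
          (fun j => (Finset.Icc 1 (ks j)).image (vs j)) =
          ((Finset.Icc 1 l).biUnion (fun j => (Finset.Icc 1 (ks j)).image (vs j))) ∪
            (Finset.Icc 1 (ks (l + 1))).image (vs (l + 1)) := by
        rw [hIns, Finset.biUnion_insert, Finset.union_comm]
      have hdisU : Disjoint
          ((Finset.Icc 1 l).biUnion (fun j => (Finset.Icc 1 (ks j)).image (vs j)))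
          ((Finset.Icc 1 (ks (l + 1))).image (vs (l + 1))) := by
        rw [Finset.disjoint_biUnion_left]
        intro j hj
        rw [Finset.mem_Icc] at hj
        exact hdisj j (l + 1) hj.1 (by omega) hlt
      have hsplit : ∀ Y : Finset (Fin n), IsSBox S T Y →
          Y ⊆ ((Finset.Icc 1 l).biUnion (fun j => (Finset.Icc 1 (ks j)).image (vs j))) ∪
            (Finset.Icc 1 (ks (l + 1))).image (vs (l + 1)) →
          Y ⊆ ((Finset.Icc 1 l).biUnion (fun j => (Finset.Icc 1 (ks j)).image (vs j))) ∨
            Y ⊆ (Finset.Icc 1 (ks (l + 1))).image (vs (l + 1)) := by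
        intro Y hY hYsub
        obtain ⟨j0, hj01, hj0t, hYj0⟩ := hbox Y hY
        rcases Nat.lt_or_ge l j0 with hgt | hle'
        · rcases Nat.eq_or_lt_of_le hgt with hEq | hlt'
          · right
            rw [← hEq] at hYj0
            exact hYj0
          · exfalso
            obtain ⟨y, hy⟩ := sbox_nonempty hY
            rcases Finset.mem_union.mp (hYsub hy) with hy' | hy'
            · obtain ⟨j, hj, hyj⟩ := Finset.mem_biUnion.mp hy'
              rw [Finset.mem_Icc] at hj
              exact Finset.disjoint_left.mp
                (hdisj j j0 hj.1 (by omega) hj0t) hyj (hYj0 hy)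
            · exact Finset.disjoint_left.mp
                (hdisj (l + 1) j0 (by omega) (by omega) hj0t) hy' (hYj0 hy)
        · left
          exact hYj0.trans (Finset.subset_biUnion_of_mem
            (fun j => (Finset.Icc 1 (ks j)).image (vs j))
            (Finset.mem_Icc.mpr ⟨hj01, hle'⟩))
      rw [hU, contrib_union hdisU hsplit, ih (by omega),
        Finset.prod_Icc_succ_top (by omega : 1 ≤ l + 1)]
  rw [treeContrib, ← hcover]
  exact main t le_rfl
end

section
/- Let T ∈ T^(m)(n) and let X = (v_1, …, v_k) be a maximal cadet sequence of T. Then for every index 1 ≤ i ≤ k there exist unique indices 1 ≤ i' ≤ i ≤ i'' ≤ k such that (v_{i'}, …, v_i, …, v_{i''}) is an S-connected cadet sequence. Consequently, X can be uniquely partitioned into S-connected cadet sequences. -/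
open scoped Classical

section StatementOneAux

variable {n m : ℕ} {T : PlaneTree n m}

lemma cadet_right_unique {u v w : Fin n} (h1 : T.IsCadet u v) (h2 : T.IsCadet u w) : v = w :=
  T.pos_inj v w h1.1.1 h2.1.1 (h1.1.2.trans h2.1.2.symm)
    (le_antisymm (h2.2 v h1.1) (h1.2 w h2.1))

lemma cadet_left_unique {u u' v : Fin n} (h1 : T.IsCadet u v) (h2 : T.IsCadet u' v) : u = u' :=
  h1.1.2.symm.trans h2.1.2

lemma rigid_up {k k₁ : ℕ} {v v₁ : ℕ → Fin n}
    (h : IsMaxCadetSeq T k v) (h₁ : IsMaxCadetSeq T k₁ v₁) :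
    ∀ p q : ℕ, 1 ≤ p → p ≤ k → 1 ≤ q → q ≤ k₁ → v₁ q = v p →
      p = q ∧ ∀ r, 1 ≤ r → r ≤ p → v₁ r = v r := by
  intro p
  induction p with
  | zero => omega
  | succ p ih =>
    intro q hp1 hpk hq1 hqk heq
    rcases Nat.lt_or_ge p 1 with hp0 | hp0
    · -- p + 1 = 1
      have hq : q = 1 := by
        by_contra hq2
        have hc : T.IsCadet (v₁ (q - 1)) (v₁ q) := h₁.1.2.2 q (by omega) hqk
        rw [heq] at hc
        have hp1' : p + 1 = 1 := by omega
        rw [hp1'] at hc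
        exact h.2.2 _ hc
      subst hq
      have hp1' : p + 1 = 1 := by omega
      refine ⟨hp1', fun r hr1 hr2 => ?_⟩
      have : r = 1 := by omega
      subst this; rw [heq, hp1']
    · -- p ≥ 1
      have hc2 : T.IsCadet (v p) (v (p + 1)) := by
        have := h.1.2.2 (p + 1) (by omega) hpk
        simpa using this
      have hq2 : 2 ≤ q := by
        by_contra hq2
        have hq1' : q = 1 := by omega
        rw [← heq, hq1'] at hc2
        exact h₁.2.2 _ hc2
      have hc1 : T.IsCadet (v₁ (q - 1)) (v₁ q) := h₁.1.2.2 q (by omega) hqk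
      rw [heq] at hc1
      have hbase : v₁ (q - 1) = v p := cadet_left_unique hc1 hc2
      obtain ⟨hpq, hagree⟩ := ih (q - 1) hp0 (by omega) (by omega) (by omega) hbase
      refine ⟨by omega, fun r hr1 hr2 => ?_⟩
      rcases Nat.lt_or_ge r (p + 1) with hr | hr
      · exact hagree r hr1 (by omega)
      · have : r = p + 1 := by omega
        subst this
        have : q = p + 1 := by omega
        rw [← this, heq, this]

lemma rigid_down {k k₁ : ℕ} {v v₁ : ℕ → Fin n}
    (h : IsMaxCadetSeq T k v) (h₁ : IsMaxCadetSeq T k₁ v₁)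
    {p : ℕ} (hp1 : 1 ≤ p) (hpk₁ : p ≤ k₁) (heqp : v₁ p = v p) :
    ∀ d, p + d ≤ k → p + d ≤ k₁ ∧ v₁ (p + d) = v (p + d) := by
  intro d
  induction d with
  | zero => intro _; exact ⟨hpk₁, heqp⟩
  | succ d ih =>
    intro hle
    obtain ⟨hk₁, heq⟩ := ih (by omega)
    have hc2 : T.IsCadet (v (p + d)) (v (p + d + 1)) := by
      have := h.1.2.2 (p + d + 1) (by omega) (by omega)
      simpa using this
    have hlt : p + d < k₁ := by
      by_contra hge
      have hpd : p + d = k₁ := by omega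
      apply h₁.2.1 (v (p + d + 1))
      rw [← hpd, heq]
      exact hc2.1
    have hc1 : T.IsCadet (v₁ (p + d)) (v₁ (p + d + 1)) := by
      have := h₁.1.2.2 (p + d + 1) (by omega) (by omega)
      simpa using this
    rw [heq] at hc1
    exact ⟨by omega, cadet_right_unique hc1 hc2⟩

lemma rigid {k k₁ : ℕ} {v v₁ : ℕ → Fin n}
    (h : IsMaxCadetSeq T k v) (h₁ : IsMaxCadetSeq T k₁ v₁)
    {p q : ℕ} (hp1 : 1 ≤ p) (hpk : p ≤ k) (hq1 : 1 ≤ q) (hqk : q ≤ k₁)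
    (heq : v₁ q = v p) :
    p = q ∧ k = k₁ ∧ ∀ r, 1 ≤ r → r ≤ k → v₁ r = v r := by
  obtain ⟨hpq, hagree⟩ := rigid_up h h₁ p q hp1 hpk hq1 hqk heq
  subst hpq
  have h1 : v₁ 1 = v 1 := hagree 1 le_rfl hp1
  have hd1 := rigid_down h h₁ le_rfl (by omega) h1
  have hd2 := rigid_down h₁ h le_rfl (by omega) h1.symm
  have hkk : k = k₁ := by
    have a1 := (hd1 (k - 1) (by omega)).1
    have a2 := (hd2 (k₁ - 1) (by omega)).1
    omega
  refine ⟨rfl, hkk, fun r hr1 hrk => ?_⟩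
  have hagr := (hd1 (r - 1) (by omega)).2
  have hr : 1 + (r - 1) = r := by omega
  rwa [hr] at hagr

end StatementOneAux

section StatementOneAux2

variable {n m : ℕ} {T : PlaneTree n m} {S : Fin n → Fin n → Finset ℤ}

lemma swindow_mono {k a b : ℕ} {v v₁ : ℕ → Fin n}
    (hagree : ∀ r, 1 ≤ r → r ≤ k → v₁ r = v r) (hb : b ≤ k)
    (hw : IsSCadetWindow S T v₁ a b) : IsSCadetWindow S T v a b := by
  obtain ⟨⟨ha1, hab, hcad⟩, hsum⟩ := hw
  refine ⟨⟨ha1, hab, fun p hap hpb => ?_⟩, fun i j hai hij hjb => ?_⟩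
  · have := hcad p hap hpb
    rwa [hagree (p - 1) (by omega) (by omega), hagree p (by omega) (by omega)] at this
  · have hs : ∑ p ∈ Finset.Icc (i + 1) j, T.lsib (v₁ p)
        = ∑ p ∈ Finset.Icc (i + 1) j, T.lsib (v p) := by
      refine Finset.sum_congr rfl fun p hp => ?_
      rw [Finset.mem_Icc] at hp
      rw [hagree p (by omega) (by omega)]
    have := hsum i j hai hij hjb
    rwa [hagree i (by omega) (by omega), hagree j (by omega) (by omega), hs] at this

lemma swindow_congr {k a b : ℕ} {v v₁ : ℕ → Fin n}
    (hagree : ∀ r, 1 ≤ r → r ≤ k → v₁ r = v r) (hb : b ≤ k) :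
    IsSCadetWindow S T v₁ a b ↔ IsSCadetWindow S T v a b :=
  ⟨swindow_mono hagree hb, swindow_mono (fun r h1 h2 => (hagree r h1 h2).symm) hb⟩

lemma maxswindow_congr {k a b : ℕ} {v v₁ : ℕ → Fin n}
    (hagree : ∀ r, 1 ≤ r → r ≤ k → v₁ r = v r) :
    IsMaxSCadetWindow S T k v₁ a b ↔ IsMaxSCadetWindow S T k v a b := by
  have main : ∀ (w w₁ : ℕ → Fin n), (∀ r, 1 ≤ r → r ≤ k → w₁ r = w r) →
      IsMaxSCadetWindow S T k w₁ a b → IsMaxSCadetWindow S T k w a b := by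
    intro w w₁ hag hw
    obtain ⟨hbk, hwin, hl, hr⟩ := hw
    refine ⟨hbk, (swindow_congr hag hbk).1 hwin, ?_, ?_⟩
    · rcases hl with h1 | h1
      · exact Or.inl h1
      · exact Or.inr fun hc => h1 ((swindow_congr hag hbk).2 hc)
    · by_cases hbk' : b = k
      · exact Or.inl hbk'
      · rcases hr with h1 | h1
        · exact Or.inl h1
        · exact Or.inr fun hc => h1 ((swindow_congr hag (by omega)).2 hc)
  exact ⟨main v v₁ hagree, main v₁ v (fun r h1 h2 => (hagree r h1 h2).symm)⟩

lemma image_window_congr {a b k : ℕ} {v v₁ : ℕ → Fin n}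
    (hagree : ∀ r, 1 ≤ r → r ≤ k → v₁ r = v r) (ha : 1 ≤ a) (hb : b ≤ k) :
    (Finset.Icc a b).image v₁ = (Finset.Icc a b).image v := by
  refine Finset.image_congr fun p hp => ?_
  simp only [Finset.coe_Icc, Set.mem_Icc] at hp
  exact hagree p (by omega) (by omega)

lemma mem_image_window {k : ℕ} {v : ℕ → Fin n} (hinj : WindowInj v 1 k)
    {a b p : ℕ} (ha : 1 ≤ a) (hb : b ≤ k) (hp1 : 1 ≤ p) (hpk : p ≤ k) :
    v p ∈ (Finset.Icc a b).image v ↔ a ≤ p ∧ p ≤ b := by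
  simp only [Finset.mem_image, Finset.mem_Icc]
  constructor
  · rintro ⟨q, ⟨hq1, hq2⟩, hq⟩
    have := hinj q p (by omega) (by omega) hp1 hpk hq
    omega
  · intro h
    exact ⟨p, h, rfl⟩

/-- From a maximal S-cadet set intersecting our maximal cadet sequence, extract a
maximal S-cadet window of our own sequence. -/
lemma maxset_window {k : ℕ} {v : ℕ → Fin n} (hmax : IsMaxCadetSeq T k v)
    (hinj : WindowInj v 1 k) {Y : Finset (Fin n)} (hY : IsMaxSCadetSet S T Y)
    {p : ℕ} (hp1 : 1 ≤ p) (hpk : p ≤ k) (hyp : v p ∈ Y) :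
    ∃ a b, IsMaxSCadetWindow S T k v a b ∧ Y = (Finset.Icc a b).image v ∧
      a ≤ p ∧ p ≤ b := by
  obtain ⟨k₁, v₁, a, b, hmax₁, hinj₁, hw₁, rfl⟩ := hY
  rw [Finset.mem_image] at hyp
  obtain ⟨q, hq, hqv⟩ := hyp
  rw [Finset.mem_Icc] at hq
  have ha1 : 1 ≤ a := hw₁.2.1.1.1
  have hab : a ≤ b := hw₁.2.1.1.2.1
  have hbk₁ : b ≤ k₁ := hw₁.1
  obtain ⟨hpq, hkk, hagree⟩ := rigid hmax hmax₁ hp1 hpk (by omega) (by omega) hqv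
  subst hkk
  refine ⟨a, b, (maxswindow_congr hagree).1 hw₁,
    image_window_congr hagree ha1 hbk₁, by omega, by omega⟩

/-- Embedding a plain cadet sequence into the maximal one. -/
lemma embed_window {k : ℕ} {v : ℕ → Fin n} (hmax : IsMaxCadetSeq T k v)
    {k₀ : ℕ} {v₀ : ℕ → Fin n} (hw : IsCadetWindow T v₀ 1 k₀)
    {p : ℕ} (hp1 : 1 ≤ p) (hpk : p ≤ k) (h1 : v₀ 1 = v p) :
    ∀ d, 1 + d ≤ k₀ → p + d ≤ k ∧ v₀ (1 + d) = v (p + d) := by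
  intro d
  induction d with
  | zero => intro _; exact ⟨hpk, h1⟩
  | succ d ih =>
    intro hle
    obtain ⟨hpd, heq⟩ := ih (by omega)
    have hc0 : T.IsCadet (v₀ (1 + d)) (v₀ (1 + d + 1)) := by
      have := hw.2.2 (1 + d + 1) (by omega) (by omega)
      simpa using this
    rw [heq] at hc0
    have hlt : p + d < k := by
      by_contra hge
      have hpd' : p + d = k := by omega
      apply hmax.2.1 (v₀ (1 + d + 1))
      rw [← hpd']
      exact hc0.1
    have hc2 : T.IsCadet (v (p + d)) (v (p + d + 1)) := by
      have := hmax.1.2.2 (p + d + 1) (by omega) (by omega)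
      simpa using this
    have : v₀ (1 + d + 1) = v (p + d + 1) := cadet_right_unique hc0 hc2
    exact ⟨by omega, this⟩

lemma image_inj_eq {k : ℕ} {v : ℕ → Fin n} (hinj : WindowInj v 1 k)
    {A B : Finset ℕ} (hA : A ⊆ Finset.Icc 1 k) (hB : B ⊆ Finset.Icc 1 k)
    (h : A.image v = B.image v) : A = B := by
  ext p
  constructor
  · intro hp
    have : v p ∈ B.image v := h ▸ Finset.mem_image_of_mem v hp
    rw [Finset.mem_image] at this
    obtain ⟨q, hq, hqv⟩ := this
    have hpA := Finset.mem_Icc.1 (hA hp)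
    have hqB := Finset.mem_Icc.1 (hB hq)
    rwa [hinj q p hqB.1 hqB.2 hpA.1 hpA.2 hqv] at hq
  · intro hp
    have : v p ∈ A.image v := h ▸ Finset.mem_image_of_mem v hp
    rw [Finset.mem_image] at this
    obtain ⟨q, hq, hqv⟩ := this
    have hpB := Finset.mem_Icc.1 (hB hp)
    have hqA := Finset.mem_Icc.1 (hA hq)
    rwa [hinj q p hqA.1 hqA.2 hpB.1 hpB.2 hqv] at hq

end StatementOneAux2

/-- Indices `p` and `p + 1` lie in a common maximal `S`-cadet window of `(v 1, …, v k)`. -/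
def Adjacent {n m : ℕ} (S : Fin n → Fin n → Finset ℤ) (T : PlaneTree n m)
    (k : ℕ) (v : ℕ → Fin n) (p : ℕ) : Prop :=
  ∃ a b, IsMaxSCadetWindow S T k v a b ∧ a ≤ p ∧ p + 1 ≤ b

/-- Lemma 3.9: every index `i` of a maximal cadet sequence
`(v 1, …, v k)` lies in a unique window `[i', i'']` which is an `S`-connected cadet
sequence; hence maximal cadet sequences are uniquely partitioned into `S`-connected
cadet sequences. -/
theorem statement_1 {n : ℕ} (S : Fin n → Fin n → Finset ℤ) (T : PlaneTree n (mOf S))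
    (k : ℕ) (v : ℕ → Fin n) (hmax : IsMaxCadetSeq T k v) (hinj : WindowInj v 1 k)
    (i : ℕ) (hi1 : 1 ≤ i) (hik : i ≤ k) :
    ∃! p : ℕ × ℕ, 1 ≤ p.1 ∧ p.1 ≤ i ∧ i ≤ p.2 ∧ p.2 ≤ k ∧
      SConnected S T ((Finset.Icc p.1 p.2).image v) := by
  classical
  have hk1 : 1 ≤ k := hmax.1.2.1
  -- the right endpoint i2
  set Q : Finset ℕ := (Finset.Icc i k).filter
    (fun q => ∀ p, i ≤ p → p < q → Adjacent S T k v p) with hQdef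
  have hiQ : i ∈ Q := by
    rw [hQdef, Finset.mem_filter, Finset.mem_Icc]
    exact ⟨⟨le_rfl, hik⟩, fun p h1 h2 => absurd h2 (by omega)⟩
  have hQne : Q.Nonempty := ⟨i, hiQ⟩
  set i2 := Q.max' hQne with hi2def
  have hi2Q := Q.max'_mem hQne
  rw [← hi2def, hQdef, Finset.mem_filter, Finset.mem_Icc] at hi2Q
  obtain ⟨⟨hii2, hi2k⟩, chain2⟩ := hi2Q
  have key2 : ¬ (Adjacent S T k v i2 ∧ i2 + 1 ≤ k) := by
    rintro ⟨hadj, hle⟩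
    have hmem : i2 + 1 ∈ Q := by
      rw [hQdef, Finset.mem_filter, Finset.mem_Icc]
      refine ⟨⟨by omega, hle⟩, fun p h1 h2 => ?_⟩
      rcases Nat.lt_or_ge p i2 with h | h
      · exact chain2 p h1 h
      · have : p = i2 := by omega
        subst this; exact hadj
    have := Finset.le_max' Q _ hmem
    rw [← hi2def] at this
    omega
  -- the left endpoint i1
  set P : Finset ℕ := (Finset.Icc 1 i).filter
    (fun q => ∀ p, q ≤ p → p < i → Adjacent S T k v p) with hPdef
  have hiP : i ∈ P := by
    rw [hPdef, Finset.mem_filter, Finset.mem_Icc]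
    exact ⟨⟨hi1, le_rfl⟩, fun p h1 h2 => absurd h2 (by omega)⟩
  have hPne : P.Nonempty := ⟨i, hiP⟩
  set i1 := P.min' hPne with hi1def
  have hi1P := P.min'_mem hPne
  rw [← hi1def, hPdef, Finset.mem_filter, Finset.mem_Icc] at hi1P
  obtain ⟨⟨hi1one, hi1i⟩, chain1⟩ := hi1P
  have key1 : ¬ (2 ≤ i1 ∧ Adjacent S T k v (i1 - 1)) := by
    rintro ⟨h2, hadj⟩
    have hmem : i1 - 1 ∈ P := by
      rw [hPdef, Finset.mem_filter, Finset.mem_Icc]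
      refine ⟨⟨by omega, by omega⟩, fun p h1 h2' => ?_⟩
      rcases Nat.lt_or_ge p i1 with h | h
      · have : p = i1 - 1 := by omega
        subst this; exact hadj
      · exact chain1 p h h2'
    have := Finset.min'_le P _ hmem
    rw [← hi1def] at this
    omega
  -- combined chain
  have chain : ∀ p, i1 ≤ p → p < i2 → Adjacent S T k v p := by
    intro p h1 h2
    rcases Nat.lt_or_ge p i with h | h
    · exact chain1 p h1 h
    · exact chain2 p h h2
  -- maximal windows meeting [i1, i2] are contained in it
  have hcontain : ∀ a b, IsMaxSCadetWindow S T k v a b → ∀ q, a ≤ q → q ≤ b →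
      i1 ≤ q → q ≤ i2 → i1 ≤ a ∧ b ≤ i2 := by
    intro a b hw q haq hqb h1q hq2
    have ha1 : 1 ≤ a := hw.2.1.1.1
    have hbk : b ≤ k := hw.1
    constructor
    · by_contra h
      push_neg at h
      exact key1 ⟨by omega, a, b, hw, by omega, by omega⟩
    · by_contra h
      push_neg at h
      exact key2 ⟨⟨a, b, hw, by omega, by omega⟩, by omega⟩
  -- property (1)
  have hX1 : IsCadetSeqSet T ((Finset.Icc i1 i2).image v) := by
    refine ⟨i2 - i1 + 1, fun p => v (p + i1 - 1), ⟨le_rfl, by omega, fun p hp1 hp2 => ?_⟩,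
      fun p q hp1 hp2 hq1 hq2 heq => ?_, ?_⟩
    · show T.IsCadet (v (p - 1 + i1 - 1)) (v (p + i1 - 1))
      have e : p - 1 + i1 - 1 = p + i1 - 1 - 1 := by omega
      rw [e]
      exact hmax.1.2.2 (p + i1 - 1) (by omega) (by omega)
    · have := hinj (p + i1 - 1) (q + i1 - 1) (by omega) (by omega) (by omega) (by omega) heq
      omega
    · ext x
      simp only [Finset.mem_image, Finset.mem_Icc]
      constructor
      · rintro ⟨q, ⟨hq1, hq2⟩, rfl⟩
        refine ⟨q - i1 + 1, ⟨by omega, by omega⟩, ?_⟩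
        show v (q - i1 + 1 + i1 - 1) = v q
        congr 1
        omega
      · rintro ⟨p, ⟨hp1, hp2⟩, rfl⟩
        exact ⟨p + i1 - 1, ⟨by omega, by omega⟩, rfl⟩
  -- property (2)
  have hX2 : ∀ Y, IsMaxSCadetSet S T Y →
      (Finset.Icc i1 i2).image v ∩ Y = ∅ ∨ Y ⊆ (Finset.Icc i1 i2).image v := by
    intro Y hY
    by_cases hne : (Finset.Icc i1 i2).image v ∩ Y = ∅
    · exact Or.inl hne
    · right
      obtain ⟨y, hy⟩ := Finset.nonempty_of_ne_empty hne
      rw [Finset.mem_inter] at hy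
      obtain ⟨hyX, hyY⟩ := hy
      rw [Finset.mem_image] at hyX
      obtain ⟨p, hp, rfl⟩ := hyX
      rw [Finset.mem_Icc] at hp
      obtain ⟨a, b, hw, rfl, hap, hpb⟩ :=
        maxset_window hmax hinj hY (by omega) (by omega) hyY
      have hcon := hcontain a b hw p hap hpb hp.1 hp.2
      exact Finset.image_subset_image (Finset.Icc_subset_Icc hcon.1 hcon.2)
  -- property (3)
  have hX3 : ∀ X', IsCadetSeqSet T X' →
      (∀ Y, IsMaxSCadetSet S T Y → X' ∩ Y = ∅ ∨ Y ⊆ X') →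
      X' ⊆ (Finset.Icc i1 i2).image v → X' = (Finset.Icc i1 i2).image v := by
    intro X' hX' hprop hsub
    obtain ⟨k₀, v₀, hw₀, hinj₀, rfl⟩ := hX'
    have hk₀ : 1 ≤ k₀ := hw₀.2.1
    have h1mem : v₀ 1 ∈ (Finset.Icc i1 i2).image v :=
      hsub (Finset.mem_image_of_mem v₀ (Finset.mem_Icc.2 ⟨le_rfl, hk₀⟩))
    rw [Finset.mem_image] at h1mem
    obtain ⟨c, hc, hc1⟩ := h1mem
    rw [Finset.mem_Icc] at hc
    have hemb := embed_window hmax hw₀ (p := c) (by omega) (by omega) hc1.symm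
    have hck : c + (k₀ - 1) ≤ k := (hemb (k₀ - 1) (by omega)).1
    have hX'eq : (Finset.Icc 1 k₀).image v₀ = (Finset.Icc c (c + k₀ - 1)).image v := by
      ext x
      simp only [Finset.mem_image, Finset.mem_Icc]
      constructor
      · rintro ⟨p, ⟨hp1, hp2⟩, rfl⟩
        refine ⟨c + (p - 1), ⟨by omega, by omega⟩, ?_⟩
        have h := (hemb (p - 1) (by omega)).2
        rw [show 1 + (p - 1) = p by omega] at h
        exact h.symm
      · rintro ⟨q, ⟨hq1, hq2⟩, rfl⟩
        refine ⟨q - c + 1, ⟨by omega, by omega⟩, ?_⟩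
        have h := (hemb (q - c) (by omega)).2
        rw [show 1 + (q - c) = q - c + 1 by omega, show c + (q - c) = q by omega] at h
        exact h
    have htop : v (c + k₀ - 1) ∈ (Finset.Icc i1 i2).image v := by
      apply hsub
      rw [hX'eq]
      exact Finset.mem_image_of_mem v (Finset.mem_Icc.2 ⟨by omega, le_rfl⟩)
    have htop2 : c + k₀ - 1 ≤ i2 :=
      ((mem_image_window hinj hi1one hi2k (by omega) (by omega)).1 htop).2
    have hc_eq : c = i1 := by
      by_contra hne
      have hlt : i1 < c := by omega
      obtain ⟨α, β, hwαβ, hα, hβ⟩ := chain (c - 1) (by omega) (by omega)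
      have hβk : β ≤ k := hwαβ.1
      have hYmax : IsMaxSCadetSet S T ((Finset.Icc α β).image v) :=
        ⟨k, v, α, β, hmax, hinj, hwαβ, rfl⟩
      rcases hprop _ hYmax with hdis | hsub'
      · have hcX' : v c ∈ (Finset.Icc 1 k₀).image v₀ := by
          rw [hX'eq]
          exact Finset.mem_image_of_mem v (Finset.mem_Icc.2 ⟨le_rfl, by omega⟩)
        have hcY : v c ∈ (Finset.Icc α β).image v :=
          Finset.mem_image_of_mem v (Finset.mem_Icc.2 ⟨by omega, by omega⟩)
        have hm := Finset.mem_inter.2 ⟨hcX', hcY⟩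
        rw [hdis] at hm
        exact absurd hm (Finset.notMem_empty _)
      · have h1 : v (c - 1) ∈ (Finset.Icc α β).image v :=
          Finset.mem_image_of_mem v (Finset.mem_Icc.2 ⟨hα, by omega⟩)
        have h2 := hsub' h1
        rw [hX'eq] at h2
        have := (mem_image_window hinj (by omega) (by omega) (by omega) (by omega)).1 h2
        omega
    have hd_eq : c + k₀ - 1 = i2 := by
      by_contra hne
      have hlt : c + k₀ - 1 < i2 := by omega
      obtain ⟨α, β, hwαβ, hα, hβ⟩ := chain (c + k₀ - 1) (by omega) hlt
      have hβk : β ≤ k := hwαβ.1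
      have hYmax : IsMaxSCadetSet S T ((Finset.Icc α β).image v) :=
        ⟨k, v, α, β, hmax, hinj, hwαβ, rfl⟩
      rcases hprop _ hYmax with hdis | hsub'
      · have hcX' : v (c + k₀ - 1) ∈ (Finset.Icc 1 k₀).image v₀ := by
          rw [hX'eq]
          exact Finset.mem_image_of_mem v (Finset.mem_Icc.2 ⟨by omega, le_rfl⟩)
        have hcY : v (c + k₀ - 1) ∈ (Finset.Icc α β).image v :=
          Finset.mem_image_of_mem v (Finset.mem_Icc.2 ⟨hα, by omega⟩)
        have hm := Finset.mem_inter.2 ⟨hcX', hcY⟩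
        rw [hdis] at hm
        exact absurd hm (Finset.notMem_empty _)
      · have h1 : v (c + k₀ - 1 + 1) ∈ (Finset.Icc α β).image v :=
          Finset.mem_image_of_mem v (Finset.mem_Icc.2 ⟨by omega, hβ⟩)
        have h2 := hsub' h1
        rw [hX'eq] at h2
        have := (mem_image_window hinj (by omega) (by omega) (by omega) (by omega)).1 h2
        omega
    rw [hX'eq, hd_eq, hc_eq]
  -- assemble
  refine ⟨(i1, i2), ⟨hi1one, hi1i, hii2, hi2k, hX1, hX2, hX3⟩, ?_⟩
  rintro ⟨p1, p2⟩ ⟨hp11, hp1i, hip2, hp2k, hSC1, hSC2, hSC3⟩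
  have hq1 : p1 ≤ i1 := by
    by_contra hgt
    push_neg at hgt
    obtain ⟨α, β, hwαβ, hα, hβ⟩ := chain (p1 - 1) (by omega) (by omega)
    have hβk : β ≤ k := hwαβ.1
    have hYmax : IsMaxSCadetSet S T ((Finset.Icc α β).image v) :=
      ⟨k, v, α, β, hmax, hinj, hwαβ, rfl⟩
    rcases hSC2 _ hYmax with hdis | hsub'
    · have h1 : v p1 ∈ (Finset.Icc p1 p2).image v :=
        Finset.mem_image_of_mem v (Finset.mem_Icc.2 ⟨le_rfl, by omega⟩)
      have h2 : v p1 ∈ (Finset.Icc α β).image v :=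
        Finset.mem_image_of_mem v (Finset.mem_Icc.2 ⟨by omega, by omega⟩)
      have hm := Finset.mem_inter.2 ⟨h1, h2⟩
      rw [hdis] at hm
      exact absurd hm (Finset.notMem_empty _)
    · have h1 : v (p1 - 1) ∈ (Finset.Icc α β).image v :=
        Finset.mem_image_of_mem v (Finset.mem_Icc.2 ⟨hα, by omega⟩)
      have := (mem_image_window hinj hp11 hp2k (by omega) (by omega)).1 (hsub' h1)
      omega
  have hq2 : i2 ≤ p2 := by
    by_contra hgt
    push_neg at hgt
    obtain ⟨α, β, hwαβ, hα, hβ⟩ := chain p2 (by omega) hgt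
    have hβk : β ≤ k := hwαβ.1
    have hYmax : IsMaxSCadetSet S T ((Finset.Icc α β).image v) :=
      ⟨k, v, α, β, hmax, hinj, hwαβ, rfl⟩
    rcases hSC2 _ hYmax with hdis | hsub'
    · have h1 : v p2 ∈ (Finset.Icc p1 p2).image v :=
        Finset.mem_image_of_mem v (Finset.mem_Icc.2 ⟨by omega, le_rfl⟩)
      have h2 : v p2 ∈ (Finset.Icc α β).image v :=
        Finset.mem_image_of_mem v (Finset.mem_Icc.2 ⟨hα, by omega⟩)
      have hm := Finset.mem_inter.2 ⟨h1, h2⟩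
      rw [hdis] at hm
      exact absurd hm (Finset.notMem_empty _)
    · have h1 : v (p2 + 1) ∈ (Finset.Icc α β).image v :=
        Finset.mem_image_of_mem v (Finset.mem_Icc.2 ⟨by omega, hβ⟩)
      have := (mem_image_window hinj hp11 hp2k (by omega) (by omega)).1 (hsub' h1)
      omega
  have hXsub : (Finset.Icc i1 i2).image v ⊆ (Finset.Icc p1 p2).image v :=
    Finset.image_subset_image (Finset.Icc_subset_Icc hq1 hq2)
  have hXeq := hSC3 _ hX1 hX2 hXsub
  have hIcc : Finset.Icc i1 i2 = Finset.Icc p1 p2 := by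
    refine image_inj_eq hinj ?_ ?_ hXeq
    · intro x hx
      rw [Finset.mem_Icc] at hx ⊢
      omega
    · intro x hx
      rw [Finset.mem_Icc] at hx ⊢
      omega
  have e1 : i1 ∈ Finset.Icc p1 p2 := by
    rw [← hIcc]
    exact Finset.mem_Icc.2 ⟨le_rfl, by omega⟩
  have e2 : p1 ∈ Finset.Icc i1 i2 := by
    rw [hIcc]
    exact Finset.mem_Icc.2 ⟨le_rfl, by omega⟩
  have e3 : i2 ∈ Finset.Icc p1 p2 := by
    rw [← hIcc]
    exact Finset.mem_Icc.2 ⟨by omega, le_rfl⟩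
  have e4 : p2 ∈ Finset.Icc i1 i2 := by
    rw [hIcc]
    exact Finset.mem_Icc.2 ⟨by omega, le_rfl⟩
  rw [Finset.mem_Icc] at e1 e2 e3 e4
  simp only [Prod.mk.injEq]
  omega
end

section
/- Let T ∈ T^(m)(n) and let X be a maximal cadet sequence of T. Then the contribution of X equals the product of the contributions of the S-connected cadet sequences into which X is partitioned. -/
open scoped Classical

section Aux2

variable {n m : ℕ} {S : Fin n → Fin n → Finset ℤ} {T : PlaneTree n m}

lemma cadet_unique_s2 {u x y : Fin n} (hx : T.IsCadet u x) (hy : T.IsCadet u y) : x = y := by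
  have h1 : T.pos x = T.pos y := le_antisymm (hy.2 x hx.1) (hx.2 y hy.1)
  exact T.pos_inj x y hx.1.1 hy.1.1 (hx.1.2.trans hy.1.2.symm) h1

lemma boxing_disjoint {X : Finset (Fin n)} {B : Finset (Finset (Fin n))}
    (h : IsSBoxingOf S T X B) {Y₁ Y₂ : Finset (Fin n)} (h1 : Y₁ ∈ B) (h2 : Y₂ ∈ B)
    (hne : Y₁ ≠ Y₂) : Disjoint Y₁ Y₂ := by
  rw [Finset.disjoint_left]
  intro u hu1 hu2
  have hX : u ∈ X := (h.1 Y₁ h1).2 hu1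
  obtain ⟨Y, _, hun⟩ := h.2 u hX
  exact hne ((hun Y₁ ⟨h1, hu1⟩).trans (hun Y₂ ⟨h2, hu2⟩).symm)

lemma boxing_union {X' X'' : Finset (Fin n)} (hd : Disjoint X' X'')
    {B' B'' : Finset (Finset (Fin n))}
    (h' : IsSBoxingOf S T X' B') (h'' : IsSBoxingOf S T X'' B'') :
    IsSBoxingOf S T (X' ∪ X'') (B' ∪ B'') := by
  constructor
  · intro Y hY
    rcases Finset.mem_union.mp hY with h | h
    · exact ⟨(h'.1 Y h).1, (h'.1 Y h).2.trans Finset.subset_union_left⟩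
    · exact ⟨(h''.1 Y h).1, (h''.1 Y h).2.trans Finset.subset_union_right⟩
  · intro u hu
    rcases Finset.mem_union.mp hu with h | h
    · obtain ⟨Y, ⟨hYB, hYu⟩, hun⟩ := h'.2 u h
      refine ⟨Y, ⟨Finset.mem_union_left _ hYB, hYu⟩, ?_⟩
      rintro Z ⟨hZB, hZu⟩
      rcases Finset.mem_union.mp hZB with hz | hz
      · exact hun Z ⟨hz, hZu⟩
      · exact absurd ((h''.1 Z hz).2 hZu) (Finset.disjoint_left.mp hd h)
    · obtain ⟨Y, ⟨hYB, hYu⟩, hun⟩ := h''.2 u h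
      refine ⟨Y, ⟨Finset.mem_union_right _ hYB, hYu⟩, ?_⟩
      rintro Z ⟨hZB, hZu⟩
      rcases Finset.mem_union.mp hZB with hz | hz
      · exact absurd ((h'.1 Z hz).2 hZu) (Finset.disjoint_right.mp hd h)
      · exact hun Z ⟨hz, hZu⟩

lemma boxing_filter {X' X'' : Finset (Fin n)} (hd : Disjoint X' X'')
    {B : Finset (Finset (Fin n))} (h : IsSBoxingOf S T (X' ∪ X'') B)
    (hall : ∀ Y ∈ B, Y ⊆ X' ∨ Y ⊆ X'') :
    IsSBoxingOf S T X' (B.filter (· ⊆ X')) := by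
  constructor
  · intro Y hY
    rw [Finset.mem_filter] at hY
    exact ⟨(h.1 Y hY.1).1, hY.2⟩
  · intro u hu
    obtain ⟨Y, ⟨hYB, hYu⟩, hun⟩ := h.2 u (Finset.mem_union_left _ hu)
    have hYX' : Y ⊆ X' := by
      rcases hall Y hYB with h1 | h1
      · exact h1
      · exact absurd (h1 hYu) (Finset.disjoint_left.mp hd hu)
    refine ⟨Y, ⟨Finset.mem_filter.mpr ⟨hYB, hYX'⟩, hYu⟩, ?_⟩
    rintro Z ⟨hZB, hZu⟩
    exact hun Z ⟨(Finset.mem_filter.mp hZB).1, hZu⟩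

lemma boxing_filter_union {X' X'' : Finset (Fin n)}
    {B : Finset (Finset (Fin n))}
    (hall : ∀ Y ∈ B, Y ⊆ X' ∨ Y ⊆ X'') :
    B.filter (· ⊆ X') ∪ B.filter (· ⊆ X'') = B := by
  apply Finset.Subset.antisymm
  · intro Y hY
    rcases Finset.mem_union.mp hY with h1 | h1 <;> exact (Finset.mem_filter.mp h1).1
  · intro Y hY
    rcases hall Y hY with h1 | h1
    · exact Finset.mem_union_left _ (Finset.mem_filter.mpr ⟨hY, h1⟩)
    · exact Finset.mem_union_right _ (Finset.mem_filter.mpr ⟨hY, h1⟩)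

lemma boxing_filter_disjoint {X' X'' : Finset (Fin n)} (hd : Disjoint X' X'')
    {B : Finset (Finset (Fin n))} (h : IsSBoxingOf S T (X' ∪ X'') B) :
    Disjoint (B.filter (· ⊆ X')) (B.filter (· ⊆ X'')) := by
  rw [Finset.disjoint_left]
  intro Y h1 h2
  obtain ⟨u, hu⟩ := sbox_nonempty (h.1 Y (Finset.mem_filter.mp h1).1).1
  exact Finset.disjoint_left.mp hd ((Finset.mem_filter.mp h1).2 hu)
    ((Finset.mem_filter.mp h2).2 hu)

lemma contrib_split {X' X'' : Finset (Fin n)} (hd : Disjoint X' X'')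
    (hsplit : ∀ Y, IsSBox S T Y → Y ⊆ X' ∪ X'' → Y ⊆ X' ∨ Y ⊆ X'') :
    contrib S T (X' ∪ X'') = contrib S T X' * contrib S T X'' := by
  classical
  have hc : ∀ X : Finset (Fin n), contrib S T X =
      ∑ B ∈ Finset.univ.filter (fun B => IsSBoxingOf S T X B),
        (-1:ℤ) ^ (X.card - B.card) := by
    intro X
    rw [contrib, Finset.sum_filter]
  rw [hc, hc, hc, Finset.sum_mul_sum, ← Finset.sum_product']
  symm
  refine Finset.sum_nbij' (i := fun p => p.1 ∪ p.2)
    (j := fun B => (B.filter (· ⊆ X'), B.filter (· ⊆ X''))) ?_ ?_ ?_ ?_ ?_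
  · rintro ⟨B', B''⟩ hp
    rw [Finset.mem_product, Finset.mem_filter, Finset.mem_filter] at hp
    exact Finset.mem_filter.mpr ⟨Finset.mem_univ _, boxing_union hd hp.1.2 hp.2.2⟩
  · intro B hB
    rw [Finset.mem_filter] at hB
    have hB' := hB.2
    have hall : ∀ Y ∈ B, Y ⊆ X' ∨ Y ⊆ X'' := fun Y hY =>
      hsplit Y (hB'.1 Y hY).1 (hB'.1 Y hY).2
    have h1 := boxing_filter hd hB' hall
    have h2 := boxing_filter hd.symm (by rwa [Finset.union_comm] at hB')
      (fun Y hY => (hall Y hY).symm)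
    exact Finset.mem_product.mpr ⟨Finset.mem_filter.mpr ⟨Finset.mem_univ _, h1⟩,
      Finset.mem_filter.mpr ⟨Finset.mem_univ _, h2⟩⟩
  · rintro ⟨B', B''⟩ hp
    rw [Finset.mem_product, Finset.mem_filter, Finset.mem_filter] at hp
    dsimp only at hp ⊢
    have e1 : (B' ∪ B'').filter (· ⊆ X') = B' := by
      apply Finset.Subset.antisymm
      · intro Y hY
        rw [Finset.mem_filter] at hY
        rcases Finset.mem_union.mp hY.1 with h1 | h1
        · exact h1
        · obtain ⟨u, hu⟩ := sbox_nonempty (hp.2.2.1 Y h1).1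
          exact absurd (hY.2 hu) (Finset.disjoint_left.mp hd.symm ((hp.2.2.1 Y h1).2 hu))
      · intro Y hY
        exact Finset.mem_filter.mpr ⟨Finset.mem_union_left _ hY, (hp.1.2.1 Y hY).2⟩
    have e2 : (B' ∪ B'').filter (· ⊆ X'') = B'' := by
      apply Finset.Subset.antisymm
      · intro Y hY
        rw [Finset.mem_filter] at hY
        rcases Finset.mem_union.mp hY.1 with h1 | h1
        · obtain ⟨u, hu⟩ := sbox_nonempty (hp.1.2.1 Y h1).1
          exact absurd (hY.2 hu) (Finset.disjoint_left.mp hd ((hp.1.2.1 Y h1).2 hu))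
        · exact h1
      · intro Y hY
        exact Finset.mem_filter.mpr ⟨Finset.mem_union_right _ hY, (hp.2.2.1 Y hY).2⟩
    rw [e1, e2]
  · intro B hB
    rw [Finset.mem_filter] at hB
    have hall : ∀ Y ∈ B, Y ⊆ X' ∨ Y ⊆ X'' := fun Y hY =>
      hsplit Y (hB.2.1 Y hY).1 (hB.2.1 Y hY).2
    exact boxing_filter_union hall
  · rintro ⟨B', B''⟩ hp
    rw [Finset.mem_product, Finset.mem_filter, Finset.mem_filter] at hp
    dsimp only at hp ⊢
    have hbd : Disjoint B' B'' := by
      rw [Finset.disjoint_left]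
      intro Y h1 h2
      obtain ⟨u, hu⟩ := sbox_nonempty (hp.1.2.1 Y h1).1
      exact Finset.disjoint_left.mp hd ((hp.1.2.1 Y h1).2 hu) ((hp.2.2.1 Y h2).2 hu)
    have l1 := boxing_card_le hp.1.2
    have l2 := boxing_card_le hp.2.2
    rw [Finset.card_union_of_disjoint hd, Finset.card_union_of_disjoint hbd, ← pow_add]
    congr 1
    omega

lemma contrib_biUnion (J : Finset ℕ) : ∀ (Xf : ℕ → Finset (Fin n)),
    (∀ j ∈ J, ∀ l ∈ J, j ≠ l → Disjoint (Xf j) (Xf l)) →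
    (∀ Y, IsSBox S T Y → Y ⊆ J.biUnion Xf → ∃ j ∈ J, Y ⊆ Xf j) →
    contrib S T (J.biUnion Xf) = ∏ j ∈ J, contrib S T (Xf j) := by
  classical
  induction J using Finset.induction_on with
  | empty => intro Xf _ _; simp [contrib_empty]
  | @insert j₀ J hj₀ ih =>
    intro Xf hdisj hbox
    have hd : Disjoint (Xf j₀) (J.biUnion Xf) := by
      rw [Finset.disjoint_biUnion_right]
      intro l hl
      exact hdisj j₀ (Finset.mem_insert_self _ _) l (Finset.mem_insert_of_mem hl)
        (fun h => hj₀ (h ▸ hl))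
    have hsub0 : J.biUnion Xf ⊆ (insert j₀ J).biUnion Xf :=
      Finset.biUnion_subset_biUnion_of_subset_left _ (Finset.subset_insert _ _)
    have hboxJ : ∀ Y, IsSBox S T Y → Y ⊆ J.biUnion Xf → ∃ j ∈ J, Y ⊆ Xf j := by
      intro Y hY hsub
      obtain ⟨j, hj, hYj⟩ := hbox Y hY (hsub.trans hsub0)
      rcases Finset.mem_insert.mp hj with rfl | hj
      · obtain ⟨u, hu⟩ := sbox_nonempty hY
        exact absurd (hYj hu) (Finset.disjoint_right.mp hd (hsub hu))
      · exact ⟨j, hj, hYj⟩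
    rw [Finset.biUnion_insert, Finset.prod_insert hj₀,
      ← ih Xf (fun j hj l hl hne => hdisj j (Finset.mem_insert_of_mem hj) l
        (Finset.mem_insert_of_mem hl) hne) hboxJ]
    apply contrib_split hd
    intro Y hY hsub
    obtain ⟨j, hj, hYj⟩ := hbox Y hY (by rwa [Finset.biUnion_insert])
    rcases Finset.mem_insert.mp hj with rfl | hj
    · exact Or.inl hYj
    · exact Or.inr (hYj.trans (Finset.subset_biUnion_of_mem Xf hj))

lemma subwindow {v : ℕ → Fin n} {a b a' b' : ℕ}
    (h : IsSCadetWindow S T v a b) (h1 : a ≤ a') (h2 : a' ≤ b') (h3 : b' ≤ b) :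
    IsSCadetWindow S T v a' b' := by
  obtain ⟨⟨ha, _, hcad⟩, hS⟩ := h
  exact ⟨⟨ha.trans h1, h2, fun p hp1 hp2 => hcad p (lt_of_le_of_lt h1 hp1) (hp2.trans h3)⟩,
    fun i j hi hij hj => hS i j (h1.trans hi) hij (hj.trans h3)⟩

lemma box_interval {k : ℕ} {v : ℕ → Fin n}
    (hmax : IsMaxCadetSeq T k v)
    {Y : Finset (Fin n)} (hY : IsSBox S T Y) (hsub : Y ⊆ (Finset.Icc 1 k).image v) :
    ∃ c d, 1 ≤ c ∧ c ≤ d ∧ d ≤ k ∧ IsSCadetWindow S T v c d ∧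
      Y = (Finset.Icc c d).image v := by
  obtain ⟨r, w, hw, hwinj, rfl⟩ := hY
  have hr : 1 ≤ r := hw.1.2.1
  have h1 : w 1 ∈ (Finset.Icc 1 k).image v :=
    hsub (Finset.mem_image_of_mem w (Finset.mem_Icc.mpr ⟨le_refl 1, hr⟩))
  rw [Finset.mem_image] at h1
  obtain ⟨c, hc, hc1⟩ := h1
  rw [Finset.mem_Icc] at hc
  have claim : ∀ p : ℕ, 1 + p ≤ r → c + p ≤ k ∧ w (1 + p) = v (c + p) := by
    intro p
    induction p with
    | zero => intro _; exact ⟨hc.2, hc1.symm⟩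
    | succ p ih =>
      intro hpr
      obtain ⟨hck, hwv⟩ := ih (by omega)
      have hcad : T.IsCadet (w (1 + p)) (w (1 + (p + 1))) := by
        have h2 := hw.1.2.2 (p + 2) (by omega) (by omega)
        have he : p + 2 - 1 = 1 + p := by omega
        have he2 : p + 2 = 1 + (p + 1) := by omega
        rw [he, he2] at h2
        exact h2
      rw [hwv] at hcad
      have hlt : c + p < k := by
        rcases lt_or_eq_of_le hck with h | h
        · exact h
        · exact absurd hcad.1 (by rw [h]; exact hmax.2.1 _)
      have hcad' : T.IsCadet (v (c + p)) (v (c + p + 1)) := by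
        have h3 := hmax.1.2.2 (c + p + 1) (by omega) (by omega)
        have he : c + p + 1 - 1 = c + p := by omega
        rw [he] at h3
        exact h3
      exact ⟨by omega, cadet_unique_s2 hcad hcad'⟩
  have hvw : ∀ q, 1 ≤ q → q ≤ r → w q = v (c - 1 + q) := by
    intro q h1 h2
    obtain ⟨_, h⟩ := claim (q - 1) (by omega)
    have e1 : 1 + (q - 1) = q := by omega
    have e2 : c + (q - 1) = c - 1 + q := by omega
    rw [e1, e2] at h
    exact h
  have hdk : c + (r - 1) ≤ k := (claim (r - 1) (by omega)).1
  refine ⟨c, c + (r - 1), hc.1, by omega, hdk, ⟨⟨hc.1, by omega, ?_⟩, ?_⟩, ?_⟩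
  · intro p hp1 hp2
    exact hmax.1.2.2 p (by omega) (by omega)
  · intro i j hi hij hj
    have hsum : ∑ p ∈ Finset.Icc (i + 1) j, T.lsib (v p)
        = ∑ q ∈ Finset.Icc (i - (c - 1) + 1) (j - (c - 1)), T.lsib (w q) := by
      have e3 : Finset.Icc (i + 1) j
          = (Finset.Icc (i - (c - 1) + 1) (j - (c - 1))).map
              (addLeftEmbedding (c - 1)) := by
        rw [Finset.map_add_left_Icc]
        congr 1 <;> omega
      rw [e3, Finset.sum_map]
      apply Finset.sum_congr rfl
      intro q hq
      rw [Finset.mem_Icc] at hq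
      have := hvw (q) (by omega) (by omega)
      rw [addLeftEmbedding_apply, this]
    have ea : v i = w (i - (c - 1)) := by
      rw [hvw (i - (c - 1)) (by omega) (by omega)]
      congr 1
      omega
    have eb : v j = w (j - (c - 1)) := by
      rw [hvw (j - (c - 1)) (by omega) (by omega)]
      congr 1
      omega
    rw [hsum, ea, eb]
    exact hw.2 (i - (c - 1)) (j - (c - 1)) (by omega) (by omega) (by omega)
  · ext u
    simp only [Finset.mem_image, Finset.mem_Icc]
    constructor
    · rintro ⟨q, hq, rfl⟩
      exact ⟨c - 1 + q, by omega, (hvw q hq.1 hq.2).symm⟩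
    · rintro ⟨p, hp, rfl⟩
      refine ⟨p - (c - 1), by omega, ?_⟩
      rw [hvw (p - (c - 1)) (by omega) (by omega)]
      congr 1
      omega

lemma extend_max {k : ℕ} {v : ℕ → Fin n} (hmax : IsMaxCadetSeq T k v)
    {c d : ℕ} (hdk : d ≤ k) (hw : IsSCadetWindow S T v c d) :
    ∃ c' d', c' ≤ c ∧ d ≤ d' ∧ d' ≤ k ∧ IsMaxSCadetWindow S T k v c' d' := by
  classical
  have hc1 : 1 ≤ c := hw.1.1
  have hcd : c ≤ d := hw.1.2.1
  have hne : (Finset.filter (fun b' => IsSCadetWindow S T v c b')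
      (Finset.Icc d k)).Nonempty :=
    ⟨d, Finset.mem_filter.mpr ⟨Finset.mem_Icc.mpr ⟨le_refl d, hdk⟩, hw⟩⟩
  set d' := (Finset.filter (fun b' => IsSCadetWindow S T v c b') (Finset.Icc d k)).max' hne
    with hd'def
  have hd'mem : d' ∈ Finset.filter (fun b' => IsSCadetWindow S T v c b') (Finset.Icc d k) :=
    Finset.max'_mem _ hne
  have hd'max : ∀ x, x ∈ Finset.Icc d k → IsSCadetWindow S T v c x → x ≤ d' := by
    intro x hx1 hx2
    rw [hd'def]
    exact Finset.le_max' (Finset.filter (fun b' => IsSCadetWindow S T v c b')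
      (Finset.Icc d k)) x (Finset.mem_filter.mpr ⟨hx1, hx2⟩)
  rw [Finset.mem_filter, Finset.mem_Icc] at hd'mem
  obtain ⟨⟨hdd', hd'k⟩, hwd'⟩ := hd'mem
  have hright : d' = k ∨ ¬ IsSCadetWindow S T v c (d' + 1) := by
    rcases eq_or_lt_of_le hd'k with h | h
    · exact Or.inl h
    · refine Or.inr fun hcon => ?_
      have := hd'max (d' + 1) (Finset.mem_Icc.mpr ⟨by omega, by omega⟩) hcon
      omega
  have hne2 : (Finset.filter (fun a' => IsSCadetWindow S T v a' d')
      (Finset.Icc 1 c)).Nonempty :=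
    ⟨c, Finset.mem_filter.mpr ⟨Finset.mem_Icc.mpr ⟨hc1, le_refl c⟩, hwd'⟩⟩
  set c' := (Finset.filter (fun a' => IsSCadetWindow S T v a' d') (Finset.Icc 1 c)).min' hne2
    with hc'def
  have hc'mem : c' ∈ Finset.filter (fun a' => IsSCadetWindow S T v a' d') (Finset.Icc 1 c) :=
    Finset.min'_mem _ hne2
  have hc'min : ∀ x, x ∈ Finset.Icc 1 c → IsSCadetWindow S T v x d' → c' ≤ x := by
    intro x hx1 hx2
    rw [hc'def]
    exact Finset.min'_le (Finset.filter (fun a' => IsSCadetWindow S T v a' d')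
      (Finset.Icc 1 c)) x (Finset.mem_filter.mpr ⟨hx1, hx2⟩)
  rw [Finset.mem_filter, Finset.mem_Icc] at hc'mem
  obtain ⟨⟨hc'1, hc'c⟩, hwc'⟩ := hc'mem
  refine ⟨c', d', hc'c, hdd', hd'k, hd'k, hwc', ?_, ?_⟩
  · rcases eq_or_lt_of_le hc'1 with h | h
    · exact Or.inl h.symm
    · refine Or.inr fun hcon => ?_
      have := hc'min (c' - 1) (Finset.mem_Icc.mpr ⟨by omega, by omega⟩) hcon
      omega
  · rcases hright with h | h
    · exact Or.inl h
    · exact Or.inr fun hcon => h (subwindow hcon hc'c (by omega) (le_refl _))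

end Aux2

/-- Lemma 3.10: the contribution of a maximal cadet sequence equals the
product of the contributions of the `S`-connected cadet sequences into which it is
partitioned. -/
theorem statement_2 {n : ℕ} (S : Fin n → Fin n → Finset ℤ) (T : PlaneTree n (mOf S))
    (k : ℕ) (v : ℕ → Fin n) (hmax : IsMaxCadetSeq T k v) (hinj : WindowInj v 1 k)
    (t : ℕ) (a b : ℕ → ℕ)
    (hconn : ∀ j, 1 ≤ j → j ≤ t → 1 ≤ a j ∧ a j ≤ b j ∧ b j ≤ k ∧
      SConnected S T ((Finset.Icc (a j) (b j)).image v))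
    (hcover : (Finset.Icc 1 t).biUnion (fun j => Finset.Icc (a j) (b j)) = Finset.Icc 1 k)
    (hdisj : ∀ j l, 1 ≤ j → j < l → l ≤ t →
      Disjoint (Finset.Icc (a j) (b j)) (Finset.Icc (a l) (b l))) :
    contrib S T ((Finset.Icc 1 k).image v) =
      ∏ j ∈ Finset.Icc 1 t, contrib S T ((Finset.Icc (a j) (b j)).image v) := by
  
  classical
  have himg : (Finset.Icc 1 k).image v =
      (Finset.Icc 1 t).biUnion (fun j => (Finset.Icc (a j) (b j)).image v) := by
    rw [← hcover]
    ext x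
    simp only [Finset.mem_image, Finset.mem_biUnion]
    tauto
  rw [himg]
  apply contrib_biUnion
  · intro j hj l hl hne
    rw [Finset.mem_Icc] at hj hl
    have hbj := hconn j hj.1 hj.2
    have hbl := hconn l hl.1 hl.2
    rw [Finset.disjoint_left]
    rintro x hx1 hx2
    rw [Finset.mem_image] at hx1 hx2
    obtain ⟨p, hp, rfl⟩ := hx1
    obtain ⟨q, hq, hqp⟩ := hx2
    rw [Finset.mem_Icc] at hp hq
    have hqp' : q = p := hinj q p (by omega) (by omega) (by omega) (by omega) hqp
    subst hqp'
    rcases lt_or_gt_of_ne hne with h | h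
    · exact Finset.disjoint_left.mp (hdisj j l hj.1 h hl.2)
        (Finset.mem_Icc.mpr hp) (Finset.mem_Icc.mpr hq)
    · exact Finset.disjoint_left.mp (hdisj l j hl.1 h hj.2)
        (Finset.mem_Icc.mpr hq) (Finset.mem_Icc.mpr hp)
  · intro Y hY hsub
    rw [← himg] at hsub
    obtain ⟨c, d, hc1, hcd, hdk, hwin, hYeq⟩ := box_interval hmax hY hsub
    obtain ⟨c', d', hc'c, hdd', hd'k, hmaxw⟩ := extend_max hmax hdk hwin
    have hc'1 : 1 ≤ c' := hmaxw.2.1.1.1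
    have hmset : IsMaxSCadetSet S T ((Finset.Icc c' d').image v) :=
      ⟨k, v, c', d', hmax, hinj, hmaxw, rfl⟩
    have hc'mem : c' ∈ Finset.Icc 1 k := Finset.mem_Icc.mpr ⟨hc'1, by omega⟩
    rw [← hcover, Finset.mem_biUnion] at hc'mem
    obtain ⟨j, hj, hc'j⟩ := hc'mem
    refine ⟨j, hj, ?_⟩
    have hjIcc := Finset.mem_Icc.mp hj
    have hSC := (hconn j hjIcc.1 hjIcc.2).2.2.2
    rcases hSC.2.1 _ hmset with hdisj' | hsubj
    · exfalso
      have hmem : v c' ∈ (Finset.Icc (a j) (b j)).image v ∩ (Finset.Icc c' d').image v := by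
        rw [Finset.mem_inter]
        exact ⟨Finset.mem_image_of_mem v hc'j,
          Finset.mem_image_of_mem v (Finset.mem_Icc.mpr ⟨le_refl c', by omega⟩)⟩
      rw [hdisj'] at hmem
      exact absurd hmem (Finset.notMem_empty _)
    · rw [hYeq]
      exact (Finset.image_subset_image (Finset.Icc_subset_Icc hc'c (by omega))).trans hsubj
end
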